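/- Let p > 5, γ < 0, ω > 0, let k ≥ 0 be an integer, let φ_0, …, φ_k ∈ H¹(ℝ), and let δ, ε > 0 with 2ε < δ. Suppose that S_{ω,γ}(Σ_{l=0}^k φ_l) ≤ n_ω − δ, S_{ω,γ}(Σ_{l=0}^k φ_l) ≥ Σ_{l=0}^k S_{ω,γ}(φ_l) − ε, I_{ω,γ}(Σ_{l=0}^k φ_l) ≥ −ε, and I_{ω,γ}(Σ_{l=0}^k φ_l) ≤ Σ_{l=0}^k I_{ω,γ}(φ_l) + ε. Then for every l ∈ {0, …, k}: 0 ≤ S_{ω,γ}(φ_l) < n_ω and I_{ω,γ}(φ_l) ≥ 0. -/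

import Mathlib

open MeasureTheory Real Filter Topology

/-- `φ : ℝ → ℂ` lies in `H¹(ℝ)`: `φ ∈ L²(ℝ)` together with a weak derivative
`dx ∈ L²(ℝ)` such that `φ x = φ 0 + ∫₀ˣ dx (t) dt` for all `x`. -/
structure H1 where
  toFun : ℝ → ℂ
  dx : ℝ → ℂ
  memL2 : MemLp toFun 2 (volume : Measure ℝ)
  dx_memL2 : MemLp dx 2 (volume : Measure ℝ)
  eq_int : ∀ x : ℝ, toFun x = toFun 0 + ∫ t in (0:ℝ)..x, dx t

/-- `‖∂ₓφ‖²_{L²}` -/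
noncomputable def gradSq (φ : H1) : ℝ := ∫ x : ℝ, ‖φ.dx x‖ ^ 2

/-- `‖φ‖²_{L²}` -/
noncomputable def massSq (φ : H1) : ℝ := ∫ x : ℝ, ‖φ.toFun x‖ ^ 2

/-- `‖φ‖^{p+1}_{L^{p+1}}` -/
noncomputable def lpPow (p : ℝ) (φ : H1) : ℝ := ∫ x : ℝ, ‖φ.toFun x‖ ^ (p + 1)

/-- The action `S_{ω,μ}(φ) = (1/4)‖∂ₓφ‖²_{L²} − (μ/2)|φ(0)|² + (ω/2)‖φ‖²_{L²}
− (1/(p+1))‖φ‖^{p+1}_{L^{p+1}}`. -/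
noncomputable def Sfun (p ω μ : ℝ) (φ : H1) : ℝ :=
  (1/4) * gradSq φ - (μ/2) * ‖φ.toFun 0‖ ^ 2 + (ω/2) * massSq φ - (1/(p+1)) * lpPow p φ

/-- The virial functional `P_μ(φ) = (1/2)‖∂ₓφ‖²_{L²} − (μ/2)|φ(0)|²
− ((p−1)/(2(p+1)))‖φ‖^{p+1}_{L^{p+1}}`. -/
noncomputable def Pfun (p μ : ℝ) (φ : H1) : ℝ :=
  (1/2) * gradSq φ - (μ/2) * ‖φ.toFun 0‖ ^ 2 - ((p-1)/(2*(p+1))) * lpPow p φ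

/-- The Nehari functional `I_{ω,γ}(φ) = (1/2)‖∂ₓφ‖²_{L²} − γ|φ(0)|² + ω‖φ‖²_{L²}
− ‖φ‖^{p+1}_{L^{p+1}}`. -/
noncomputable def Ifun (p ω γ : ℝ) (φ : H1) : ℝ :=
  (1/2) * gradSq φ - γ * ‖φ.toFun 0‖ ^ 2 + ω * massSq φ - lpPow p φ

/-- `K^{α,β}_{ω,γ}`. -/
noncomputable def Kfun (p ω γ α β : ℝ) (φ : H1) : ℝ :=
  ((2*α-β)/4) * gradSq φ + (ω*(2*α+β)/2) * massSq φ - γ*α*‖φ.toFun 0‖ ^ 2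
    - (((p+1)*α+β)/(p+1)) * lpPow p φ

/-- `J^{α,β}_{ω,γ}(φ) = S_{ω,γ}(φ) − K^{α,β}_{ω,γ}(φ)/μ̄` with `μ̄ = max(2α−β, 2α+β)`. -/
noncomputable def Jfun (p ω γ α β : ℝ) (φ : H1) : ℝ :=
  Sfun p ω γ φ - Kfun p ω γ α β φ / max (2*α-β) (2*α+β)

/-- The mass `M(φ) = (1/2)‖φ‖²_{L²}`. -/
noncomputable def Mfun (φ : H1) : ℝ := (1/2) * massSq φ

/-- The energy `E_μ(φ) = (1/4)‖∂ₓφ‖²_{L²} − (μ/2)|φ(0)|² − (1/(p+1))‖φ‖^{p+1}_{L^{p+1}}`. -/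
noncomputable def Efun (p μ : ℝ) (φ : H1) : ℝ :=
  (1/4) * gradSq φ - (μ/2) * ‖φ.toFun 0‖ ^ 2 - (1/(p+1)) * lpPow p φ

/-- `n_ω`: infimum of `S_{ω,γ}` over nonzero `H¹(ℝ)` functions with `P_γ = 0`. -/
noncomputable def nOmega (p γ ω : ℝ) : ℝ :=
  sInf {s : ℝ | ∃ φ : H1, φ.toFun ≠ 0 ∧ Pfun p γ φ = 0 ∧ Sfun p ω γ φ = s}

/-- `r_ω`: infimum of `S_{ω,γ}` over nonzero even `H¹(ℝ)` functions with `P_γ = 0`. -/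
noncomputable def rOmega (p γ ω : ℝ) : ℝ :=
  sInf {s : ℝ | ∃ φ : H1, φ.toFun ≠ 0 ∧ (∀ x, φ.toFun (-x) = φ.toFun x) ∧
    Pfun p γ φ = 0 ∧ Sfun p ω γ φ = s}

/-- `l_ω`: infimum of `S_{ω,0}` over nonzero `H¹(ℝ)` functions with `P_0 = 0`. -/
noncomputable def lOmega (p ω : ℝ) : ℝ :=
  sInf {s : ℝ | ∃ φ : H1, φ.toFun ≠ 0 ∧ Pfun p 0 φ = 0 ∧ Sfun p ω 0 φ = s}

/-- The inverse hyperbolic tangent. -/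
noncomputable def artanh (x : ℝ) : ℝ := (1/2) * Real.log ((1+x)/(1-x))

/-- The standing-wave profile
`Q_{ω,γ}(x) = ( ((p+1)ω/2)·sech²( ((p−1)√ω/√2)|x| + artanh(γ/√(2ω)) ) )^{1/(p−1)}`. -/
noncomputable def Qsol (p γ ω : ℝ) : ℝ → ℝ := fun x =>
  (((p+1)*ω/2) *
    (1 / Real.cosh (((p-1)*Real.sqrt ω/Real.sqrt 2) * |x| + _root_.artanh (γ / Real.sqrt (2*ω)))) ^ 2)
  ^ (1/(p-1))

/-- The free ground state `Q_{1,0}(x) = ( ((p+1)/2)·sech²( ((p−1)/√2)x ) )^{1/(p−1)}`. -/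
noncomputable def Qfree (p : ℝ) : ℝ → ℝ := fun x =>
  (((p+1)/2) * (1 / Real.cosh (((p-1)/Real.sqrt 2) * x)) ^ 2) ^ (1/(p-1))

/-- `‖φ‖²_𝓗 = (1/4)‖∂ₓφ‖²_{L²} + (ω/2)‖φ‖²_{L²} − (γ/2)|φ(0)|²`. -/
noncomputable def HnormSq (ω γ : ℝ) (φ : H1) : ℝ :=
  (1/4) * gradSq φ + (ω/2) * massSq φ - (γ/2) * ‖φ.toFun 0‖ ^ 2

section Aux

open MeasureTheory intervalIntegral

lemma gradSq_nonneg (φ : H1) : 0 ≤ gradSq φ :=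
  integral_nonneg fun x => by positivity

lemma massSq_nonneg (φ : H1) : 0 ≤ massSq φ :=
  integral_nonneg fun x => by positivity

lemma lpPow_nonneg (p : ℝ) (φ : H1) : 0 ≤ lpPow p φ :=
  integral_nonneg fun x => Real.rpow_nonneg (norm_nonneg _) _

lemma integrable_sq (φ : H1) : Integrable (fun x => ‖φ.toFun x‖ ^ 2) volume := by
  have := φ.memL2.integrable_norm_rpow two_ne_zero ENNReal.ofNat_ne_top
  simpa [Real.rpow_natCast] using this

lemma integrable_sq_dx (φ : H1) : Integrable (fun x => ‖φ.dx x‖ ^ 2) volume := by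
  have := φ.dx_memL2.integrable_norm_rpow two_ne_zero ENNReal.ofNat_ne_top
  simpa [Real.rpow_natCast] using this

lemma intervalIntegrable_dx (φ : H1) (a b : ℝ) : IntervalIntegrable φ.dx volume a b := by
  rw [intervalIntegrable_iff]
  haveI : IsFiniteMeasure (volume.restrict (Set.uIoc a b)) := by
    constructor
    rw [Measure.restrict_apply_univ, Set.uIoc]
    exact measure_Ioc_lt_top
  exact (φ.dx_memL2.restrict (Set.uIoc a b)).integrable one_le_two

lemma H1.cont (φ : H1) : Continuous φ.toFun := by
  have : φ.toFun = fun x => φ.toFun 0 + ∫ t in (0:ℝ)..x, φ.dx t := funext φ.eq_int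
  rw [this]
  exact continuous_const.add
    (intervalIntegral.continuous_primitive (fun a b => intervalIntegrable_dx φ a b) 0)

lemma H1.integral_dx (φ : H1) (a b : ℝ) :
    ∫ t in a..b, φ.dx t = φ.toFun b - φ.toFun a := by
  have hb := φ.eq_int b
  have ha := φ.eq_int a
  have := integral_interval_sub_left (intervalIntegrable_dx φ 0 b) (intervalIntegrable_dx φ 0 a)
  rw [← this, hb, ha]
  ring

end Aux

section Scale

open MeasureTheory intervalIntegral

variable (φ : H1) (c lam x₀ : ℝ) in
/-- The rescaled-translated function `x ↦ c · φ(λ x + x₀)` as an `H1` element. -/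
noncomputable def H1.scale (hc : 0 < c) (hlam : 0 < lam) : H1 where
  toFun := fun x => (c:ℂ) * φ.toFun (lam * x + x₀)
  dx := fun x => ((c * lam : ℝ):ℂ) * φ.dx (lam * x + x₀)
  memL2 := by
    have haff : Continuous fun x : ℝ => lam * x + x₀ :=
      (continuous_const.mul continuous_id).add continuous_const
    have hAESM : AEStronglyMeasurable (fun x => (c:ℂ) * φ.toFun (lam * x + x₀)) volume :=
      (continuous_const.mul (φ.cont.comp haff)).aestronglyMeasurable
    rw [memLp_two_iff_integrable_sq_norm hAESM]
    have h1 : Integrable (fun y : ℝ => ‖φ.toFun (y + x₀)‖ ^ 2) volume :=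
      (integrable_sq φ).comp_add_right x₀
    have h2 : Integrable (fun x : ℝ => ‖φ.toFun (lam * x + x₀)‖ ^ 2) volume :=
      (MeasureTheory.integrable_comp_mul_left_iff
        (fun y => ‖φ.toFun (y + x₀)‖ ^ 2) hlam.ne').mpr h1
    have h3 := h2.const_mul (c ^ 2)
    have heq : (fun x => ‖(c:ℂ) * φ.toFun (lam * x + x₀)‖ ^ 2)
        = fun x => c ^ 2 * ‖φ.toFun (lam * x + x₀)‖ ^ 2 := by
      funext x
      rw [norm_mul, Complex.norm_real, Real.norm_eq_abs, abs_of_pos hc, mul_pow]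
    rw [heq]; exact h3
  dx_memL2 := by
    have hqmp : Measure.QuasiMeasurePreserving (fun x : ℝ => lam * x + x₀) volume volume := by
      have hmul : Measure.QuasiMeasurePreserving (fun x : ℝ => lam * x) volume volume :=
        ⟨(measurable_const_mul lam), by
          rw [Real.map_volume_mul_left hlam.ne']
          exact MeasureTheory.Measure.smul_absolutelyContinuous⟩
      have htr := (measurePreserving_add_right volume x₀).quasiMeasurePreserving
      exact htr.comp hmul
    have hAESM : AEStronglyMeasurable
        (fun x => ((c * lam : ℝ):ℂ) * φ.dx (lam * x + x₀)) volume :=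
      (aestronglyMeasurable_const.mul (φ.dx_memL2.1.comp_quasiMeasurePreserving hqmp))
    rw [memLp_two_iff_integrable_sq_norm hAESM]
    have h1 : Integrable (fun y : ℝ => ‖φ.dx (y + x₀)‖ ^ 2) volume :=
      (integrable_sq_dx φ).comp_add_right x₀
    have h2 : Integrable (fun x : ℝ => ‖φ.dx (lam * x + x₀)‖ ^ 2) volume :=
      (MeasureTheory.integrable_comp_mul_left_iff
        (fun y => ‖φ.dx (y + x₀)‖ ^ 2) hlam.ne').mpr h1
    have h3 := h2.const_mul ((c * lam) ^ 2)
    have heq : (fun x => ‖((c * lam : ℝ):ℂ) * φ.dx (lam * x + x₀)‖ ^ 2)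
        = fun x => (c * lam) ^ 2 * ‖φ.dx (lam * x + x₀)‖ ^ 2 := by
      funext x
      rw [norm_mul, Complex.norm_real, Real.norm_eq_abs,
        abs_of_pos (mul_pos hc hlam), mul_pow]
    rw [heq]; exact h3
  eq_int := by
    intro x
    have hint : ∫ t in (0:ℝ)..x, ((c * lam : ℝ):ℂ) * φ.dx (lam * t + x₀)
        = ((c * lam : ℝ):ℂ) * ∫ t in (0:ℝ)..x, φ.dx (lam * t + x₀) :=
      intervalIntegral.integral_const_mul _ _
    have hcv : ∫ t in (0:ℝ)..x, φ.dx (lam * t + x₀)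
        = lam⁻¹ • ∫ t in lam * 0 + x₀..lam * x + x₀, φ.dx t :=
      intervalIntegral.integral_comp_mul_add φ.dx hlam.ne' x₀
    rw [hint, hcv, mul_zero, zero_add, φ.integral_dx x₀ (lam * x + x₀)]
    rw [Complex.real_smul]
    push_cast
    have : (lam:ℂ) ≠ 0 := by exact_mod_cast hlam.ne'
    field_simp
    ring

lemma scale_integral {lam : ℝ} (x₀ : ℝ) (hlam : 0 < lam) (u : ℝ → ℝ) :
    ∫ x : ℝ, u (lam * x + x₀) = lam⁻¹ * ∫ x : ℝ, u x := by
  have h1 : (fun x : ℝ => u (lam * x + x₀)) = fun x => (fun y => u (y + x₀)) (lam * x) := rfl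
  rw [h1, MeasureTheory.Measure.integral_comp_mul_left (fun y => u (y + x₀)) lam,
    MeasureTheory.integral_add_right_eq_self (fun y => u y) x₀, smul_eq_mul,
    abs_of_pos (inv_pos.2 hlam)]

lemma scale_gradSq (φ : H1) {c lam : ℝ} (x₀ : ℝ) (hc : 0 < c) (hlam : 0 < lam) : gradSq (H1.scale φ c lam x₀ hc hlam) = c ^ 2 * lam * gradSq φ := by
  unfold gradSq
  have heq : (fun x => ‖(H1.scale φ c lam x₀ hc hlam).dx x‖ ^ 2)
      = fun x => (c * lam) ^ 2 * (fun y => ‖φ.dx y‖ ^ 2) (lam * x + x₀) := by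
    funext x
    simp only [H1.scale]
    rw [norm_mul, Complex.norm_real, Real.norm_eq_abs, abs_of_pos (mul_pos hc hlam), mul_pow]
  rw [heq, MeasureTheory.integral_const_mul, scale_integral x₀ hlam (fun y => ‖φ.dx y‖ ^ 2)]
  field_simp

lemma scale_massSq (φ : H1) {c lam : ℝ} (x₀ : ℝ) (hc : 0 < c) (hlam : 0 < lam) : massSq (H1.scale φ c lam x₀ hc hlam) = c ^ 2 * lam⁻¹ * massSq φ := by
  unfold massSq
  have heq : (fun x => ‖(H1.scale φ c lam x₀ hc hlam).toFun x‖ ^ 2)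
      = fun x => c ^ 2 * (fun y => ‖φ.toFun y‖ ^ 2) (lam * x + x₀) := by
    funext x
    simp only [H1.scale]
    rw [norm_mul, Complex.norm_real, Real.norm_eq_abs, abs_of_pos hc, mul_pow]
  rw [heq, MeasureTheory.integral_const_mul, scale_integral x₀ hlam (fun y => ‖φ.toFun y‖ ^ 2)]
  ring

lemma scale_lpPow (φ : H1) {c lam : ℝ} (x₀ : ℝ) (hc : 0 < c) (hlam : 0 < lam) (p : ℝ) :
    lpPow p (H1.scale φ c lam x₀ hc hlam) = c ^ (p+1) * lam⁻¹ * lpPow p φ := by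
  unfold lpPow
  have heq : (fun x => ‖(H1.scale φ c lam x₀ hc hlam).toFun x‖ ^ (p+1))
      = fun x => c ^ (p+1) * (fun y => ‖φ.toFun y‖ ^ (p+1)) (lam * x + x₀) := by
    funext x
    simp only [H1.scale]
    rw [norm_mul, Complex.norm_real, Real.norm_eq_abs, abs_of_pos hc,
      Real.mul_rpow hc.le (norm_nonneg _)]
  rw [heq, MeasureTheory.integral_const_mul,
    scale_integral x₀ hlam (fun y => ‖φ.toFun y‖ ^ (p+1))]
  ring

lemma scale_atZero (φ : H1) {c lam : ℝ} (x₀ : ℝ) (hc : 0 < c) (hlam : 0 < lam) :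
    ‖(H1.scale φ c lam x₀ hc hlam).toFun 0‖ ^ 2 = c ^ 2 * ‖φ.toFun x₀‖ ^ 2 := by
  simp only [H1.scale]
  rw [mul_zero, zero_add, norm_mul, Complex.norm_real, Real.norm_eq_abs, abs_of_pos hc, mul_pow]

end Scale

section Pos

open MeasureTheory Filter

lemma exists_ne_zero_of_lpPow_pos {p : ℝ} (hp1 : p + 1 ≠ 0) (ψ : H1)
    (hL : 0 < lpPow p ψ) : ∃ y, ψ.toFun y ≠ 0 := by
  by_contra h
  push_neg at h
  have : lpPow p ψ = 0 := by
    unfold lpPow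
    have : (fun x => ‖ψ.toFun x‖ ^ (p+1)) = fun _ => (0:ℝ) := by
      funext x; rw [h x]; simp [Real.zero_rpow hp1]
    rw [this, integral_zero]
  linarith

lemma massSq_pos_of_lpPow_pos {p : ℝ} (hp1 : p + 1 ≠ 0) (ψ : H1)
    (hL : 0 < lpPow p ψ) : 0 < massSq ψ := by
  rcases (massSq_nonneg ψ).lt_or_eq with h | h
  · exact h
  · exfalso
    have hzero : (fun x => ‖ψ.toFun x‖ ^ 2) =ᵐ[volume] 0 :=
      (integral_eq_zero_iff_of_nonneg (fun x => by positivity) (integrable_sq ψ)).1 h.symm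
    have hfz : ψ.toFun =ᵐ[volume] 0 := by
      filter_upwards [hzero] with x hx
      have : ‖ψ.toFun x‖ ^ 2 = 0 := hx
      simpa [pow_eq_zero_iff, norm_eq_zero] using this
    have : lpPow p ψ = 0 := by
      unfold lpPow
      rw [MeasureTheory.integral_congr_ae (g := fun _ => (0:ℝ)) ?_, integral_zero]
      filter_upwards [hfz] with x hx
      rw [Pi.zero_apply] at hx
      rw [hx]; simp [Real.zero_rpow hp1]
    linarith

lemma gradSq_pos_of_massSq_pos (ψ : H1) (hM : 0 < massSq ψ) : 0 < gradSq ψ := by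
  rcases (gradSq_nonneg ψ).lt_or_eq with h | h
  · exact h
  · exfalso
    have hzero : (fun x => ‖ψ.dx x‖ ^ 2) =ᵐ[volume] 0 :=
      (integral_eq_zero_iff_of_nonneg (fun x => by positivity) (integrable_sq_dx ψ)).1 h.symm
    have hdz : ψ.dx =ᵐ[volume] 0 := by
      filter_upwards [hzero] with x hx
      have : ‖ψ.dx x‖ ^ 2 = 0 := hx
      simpa [pow_eq_zero_iff, norm_eq_zero] using this
    have hconst : ∀ x, ψ.toFun x = ψ.toFun 0 := by
      intro x
      rw [ψ.eq_int x]
      have : ∫ t in (0:ℝ)..x, ψ.dx t = ∫ t in (0:ℝ)..x, (0:ℂ) := by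
        apply intervalIntegral.integral_congr_ae
        filter_upwards [hdz] with t ht _
        exact ht
      rw [this]; simp
    have hc0 : ψ.toFun 0 = 0 := by
      by_contra hc
      have hfun : ψ.toFun = fun _ => ψ.toFun 0 := funext hconst
      have hfin := ψ.memL2.2
      rw [hfun, MeasureTheory.eLpNorm_const _ two_ne_zero (by simp [NeZero.ne])] at hfin
      · simp only [Real.volume_univ] at hfin
        rw [ENNReal.top_rpow_of_pos (by norm_num)] at hfin
        rw [ENNReal.mul_top (by simpa using hc)] at hfin
        exact (lt_irrefl _ hfin).elim
    have : massSq ψ = 0 := by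
      unfold massSq
      have : (fun x => ‖ψ.toFun x‖ ^ 2) = fun _ => (0:ℝ) := by
        funext x; rw [hconst x, hc0]; simp
      rw [this, integral_zero]
    linarith

lemma exists_small_point (ψ : H1) (n : ℕ) : ∃ x₀ : ℝ, ‖ψ.toFun x₀‖ ^ 2 < ((n:ℝ)+1)⁻¹ := by
  by_contra h
  push_neg at h
  set A := ∫ x : ℝ, ‖ψ.toFun x‖ ^ 2 with hA
  have hA0 : 0 ≤ A := integral_nonneg fun x => by positivity
  have hn : (0:ℝ) < (n:ℝ) + 1 := by positivity
  set T : ℝ := (A+1) * ((n:ℝ)+1) with hT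
  have hT0 : 0 ≤ T := by positivity
  have h1 : ((n:ℝ)+1)⁻¹ * (volume (Set.Ioc (0:ℝ) T)).toReal
      ≤ ∫ x in Set.Ioc (0:ℝ) T, ‖ψ.toFun x‖ ^ 2 :=
    by
      have := setIntegral_ge_of_const_le (s := Set.Ioc (0:ℝ) T) measurableSet_Ioc
        (by rw [Real.volume_Ioc]; exact ENNReal.ofReal_ne_top)
        (fun x _ => h x) (integrable_sq ψ).integrableOn
      rw [smul_eq_mul, mul_comm] at this; exact this
  have h2 : ∫ x in Set.Ioc (0:ℝ) T, ‖ψ.toFun x‖ ^ 2 ≤ A :=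
    setIntegral_le_integral (integrable_sq ψ)
      (Filter.Eventually.of_forall fun x => by positivity)
  rw [Real.volume_Ioc, ENNReal.toReal_ofReal (by linarith)] at h1
  have : ((n:ℝ)+1)⁻¹ * (T - 0) = A + 1 := by
    rw [hT]; field_simp; ring
  rw [this] at h1
  linarith

lemma arith_bdd {p γ ω g b l m : ℝ} (hp : 5 < p) (hγ : γ < 0) (hω : 0 < ω)
    (hb : 0 ≤ b) (hm : 0 ≤ m) (hl : 0 ≤ l)
    (hP : (1/2) * g - (γ/2) * b - ((p-1)/(2*(p+1))) * l = 0) :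
    0 ≤ (1/4) * g - (γ/2) * b + (ω/2) * m - (1/(p+1)) * l := by
  have hp1 : (0:ℝ) < p + 1 := by linarith
  have hP2 : (p - 1) * l = (p+1) * g - γ * (p+1) * b := by
    have h2 := hP
    field_simp at h2
    linarith
  by_contra hneg
  push_neg at hneg
  have h3 : (p+1) * ((1/4) * g - (γ/2) * b + (ω/2) * m - (1/(p+1)) * l) < 0 :=
    mul_neg_of_pos_of_neg hp1 hneg
  have hl4 : (p+1) * ((1/(p+1)) * l) = l := by field_simp
  have f1 : 0 ≤ (p-5) * l := mul_nonneg (by linarith) hl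
  have f2 : 0 ≤ (-γ) * b := mul_nonneg (by linarith) hb
  have f3 : 0 ≤ (-γ) * b * p := mul_nonneg f2 (by linarith)
  have f4 : 0 ≤ ω * m := mul_nonneg hω.le hm
  have f5 : 0 ≤ ω * m * p := mul_nonneg f4 (by linarith)
  linarith [h3, hl4, hP2, f1, f2, f3, f4, f5]

lemma nOmega_set_bddBelow {p γ ω : ℝ} (hp : 5 < p) (hγ : γ < 0) (hω : 0 < ω) :
    ∀ s ∈ {s : ℝ | ∃ φ : H1, φ.toFun ≠ 0 ∧ Pfun p γ φ = 0 ∧ Sfun p ω γ φ = s}, (0:ℝ) ≤ s := by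
  rintro s ⟨ψ, -, hP, rfl⟩
  unfold Pfun at hP
  unfold Sfun
  exact arith_bdd hp hγ hω (by positivity) (massSq_nonneg ψ) (lpPow_nonneg p ψ) hP

end Pos

lemma amgm_core {p G m L : ℝ} (hp : 5 < p) (hG : 0 < G) (hm : 0 < m) (hL : 0 < L)
    (hcon : (1/2)*G + m ≤ L) :
    ((p-1)/(p+3)*m / ((p-1)/(2*(p+1))*L)) ^ ((p+1):ℝ)
      ≤ (2*((p-1)/(p+3))*m/G) ^ (((p-1):ℝ)/2) := by
  have hp1 : (0:ℝ) < p + 1 := by linarith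
  have hp3 : (0:ℝ) < p + 3 := by linarith
  have hpm : (0:ℝ) < p - 1 := by linarith
  set C : ℝ := (p-1)/(2*(p+1)) with hC
  set β : ℝ := (p-1)/(p+3) with hβ
  have hCpos : 0 < C := by positivity
  have hβpos : 0 < β := by positivity
  have hβm : 0 < β * m := by positivity
  set w₂ : ℝ := (p+3)/(2*(p+1)) with hw₂
  have hw : C + w₂ = 1 := by rw [hw₂, hC]; field_simp; ring
  have hgm := Real.geom_mean_le_arith_mean2_weighted (by positivity) (by positivity)
    (by positivity : (0:ℝ) ≤ G/2) hβm.le hw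
  have hw2β : w₂ * β = C := by rw [hw₂, hβ, hC]; field_simp
  have hsum : C*(G/2) + w₂*(β*m) = C*((1/2)*G + m) := by rw [← hw2β]; ring
  have hle : (G/2) ^ C * (β*m) ^ w₂ ≤ C*L := by
    calc (G/2) ^ C * (β*m) ^ w₂ ≤ C*(G/2) + w₂*(β*m) := hgm
    _ = C*((1/2)*G + m) := hsum
    _ ≤ C*L := mul_le_mul_of_nonneg_left hcon hCpos.le
  have hup := Real.rpow_le_rpow (by positivity) hle (by positivity : (0:ℝ) ≤ p+1)
  have hAM : (G/2) ^ (((p-1):ℝ)/2) * (β*m) ^ (((p+3):ℝ)/2) ≤ (C*L) ^ ((p+1):ℝ) := by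
    have hrw : ((G/2) ^ C * (β*m) ^ w₂) ^ ((p+1):ℝ)
        = (G/2) ^ (C*(p+1)) * (β*m) ^ (w₂*(p+1)) := by
      rw [Real.mul_rpow (by positivity) (by positivity),
        Real.rpow_mul (by positivity : (0:ℝ) ≤ G/2),
        Real.rpow_mul hβm.le]
    have he1 : C*(p+1) = (p-1)/2 := by rw [hC]; field_simp
    have he2 : w₂*(p+1) = (p+3)/2 := by rw [hw₂]; field_simp
    rw [hrw, he1, he2] at hup
    exact hup
  -- final rearrangement
  have hq : (0:ℝ) < (p-1)/2 := by positivity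
  rw [Real.div_rpow hβm.le (by positivity : (0:ℝ) ≤ C*L),
    Real.div_rpow (by positivity : (0:ℝ) ≤ 2*β*m) hG.le]
  rw [div_le_div_iff₀ (by positivity) (by positivity)]
  have hsplit : (β*m) ^ ((p+1):ℝ) = (β*m) ^ (((p+3):ℝ)/2) * (β*m) ^ (((p-1):ℝ)/2) := by
    rw [← Real.rpow_add hβm]
    congr 1
    ring
  have hGsplit : G ^ (((p-1):ℝ)/2) = 2 ^ (((p-1):ℝ)/2) * (G/2) ^ (((p-1):ℝ)/2) := by
    rw [← Real.mul_rpow (by norm_num) (by positivity)]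
    congr 1
    ring
  have h2βm : (2*β*m) ^ (((p-1):ℝ)/2) = 2 ^ (((p-1):ℝ)/2) * (β*m) ^ (((p-1):ℝ)/2) := by
    rw [← Real.mul_rpow (by norm_num) hβm.le]
    congr 1
    ring
  have hF : (0:ℝ) < 2 ^ (((p-1):ℝ)/2) * (β*m) ^ (((p-1):ℝ)/2) :=
    mul_pos (Real.rpow_pos_of_pos (by norm_num) _) (Real.rpow_pos_of_pos hβm _)
  have hmul := mul_le_mul_of_nonneg_right hAM hF.le
  calc (β*m) ^ ((p+1):ℝ) * G ^ (((p-1):ℝ)/2)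
      = ((G/2) ^ (((p-1):ℝ)/2) * (β*m) ^ (((p+3):ℝ)/2))
        * (2 ^ (((p-1):ℝ)/2) * (β*m) ^ (((p-1):ℝ)/2)) := by
        rw [hsplit, hGsplit]; ring
    _ ≤ (C*L) ^ ((p+1):ℝ) * (2 ^ (((p-1):ℝ)/2) * (β*m) ^ (((p-1):ℝ)/2)) := hmul
    _ = (2*β*m) ^ (((p-1):ℝ)/2) * (C*L) ^ ((p+1):ℝ) := by rw [h2βm]; ring

lemma key_ineq {p ω G M L lam : ℝ} (hp : 5 < p) (hω : 0 < ω) (hG : 0 < G) (hM : 0 < M)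
    (hL : 0 < L) (hcon : (1/2)*G + ω*M ≤ L)
    (hlam : lam = Real.sqrt (2*((p-1)/(p+3))*(ω*M)/G)) :
    (lam*(lam*G)/(2*((p-1)/(2*(p+1)))*L)) ^ ((2:ℝ)/(p-1)) * ((1/4)*lam*G + (ω/2)*lam⁻¹*M)
      - (lam*(lam*G)/(2*((p-1)/(2*(p+1)))*L)) ^ (((p+1):ℝ)/(p-1)) * ((1/(p+1))*lam⁻¹*L)
      ≤ (p-1)/(2*(p+1)) * L := by
  have hp1 : (0:ℝ) < p + 1 := by linarith
  have hp3 : (0:ℝ) < p + 3 := by linarith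
  have hpm : (0:ℝ) < p - 1 := by linarith
  set m : ℝ := ω * M with hm
  have hmpos : 0 < m := by positivity
  set C : ℝ := (p-1)/(2*(p+1)) with hC
  set β : ℝ := (p-1)/(p+3) with hβ
  have hCpos : 0 < C := by positivity
  have hβpos : 0 < β := by positivity
  have hlampos : 0 < lam := by
    rw [hlam]; exact Real.sqrt_pos.2 (by positivity)
  have hlam2 : lam^2 = 2*β*m/G := by
    rw [hlam, Real.sq_sqrt (by positivity)]
  have hlam2G : lam^2*G = 2*β*m := by rw [hlam2]; field_simp
  set D : ℝ := β*m/(C*L) with hD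
  have hDpos : 0 < D := by positivity
  have hu0 : lam*(lam*G)/(2*C*L) = D := by
    rw [hD, show lam*(lam*G) = lam^2*G by ring, hlam2G]
    field_simp
  rw [hu0]
  -- split the big exponent
  have hexp1 : ((p+1):ℝ)/(p-1) = 2/(p-1) + 1 := by field_simp; ring
  have hsplit : D ^ (((p+1):ℝ)/(p-1)) = D ^ ((2:ℝ)/(p-1)) * D := by
    rw [hexp1, Real.rpow_add hDpos, Real.rpow_one]
  rw [hsplit]
  -- bracket identity
  have hlG : lam*G = 2*β*m/lam := by
    rw [eq_div_iff hlampos.ne']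
    linear_combination hlam2G
  have hDterm : D*((1/(p+1))*lam⁻¹*L) = 2*β*m/((p-1)*lam) := by
    rw [hD, hC]
    field_simp
  have hbr : (1/4)*(lam*G) + (ω/2)*lam⁻¹*M - D*((1/(p+1))*lam⁻¹*L) = β*m/lam := by
    rw [hlG, hDterm, hβ, hm]
    field_simp
    ring
  -- main rpow bound : D^(2/(p-1)) * D ≤ lam
  have hcore2 : D ^ ((p+1):ℝ) ≤ (2*β*m/G) ^ (((p-1):ℝ)/2) := by
    rw [hD, hβ, hC]
    exact amgm_core hp hG hmpos hL hcon
  have hcore3 : D ^ ((p+1):ℝ) ≤ (lam^2) ^ (((p-1):ℝ)/2) := by rw [hlam2]; exact hcore2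
  have h2 : D ^ ((2:ℝ)/(p-1)) * D ≤ lam := by
    have e1 : D ^ ((2:ℝ)/(p-1)) * D = (D ^ ((p+1):ℝ)) ^ ((1:ℝ)/(p-1)) := by
      rw [← Real.rpow_mul hDpos.le]
      rw [show (p+1)*((1:ℝ)/(p-1)) = 2/(p-1) + 1 by field_simp; ring]
      rw [Real.rpow_add hDpos, Real.rpow_one]
    have e2 : ((lam^2) ^ (((p-1):ℝ)/2)) ^ ((1:ℝ)/(p-1)) = lam := by
      rw [← Real.rpow_natCast lam 2, ← Real.rpow_mul hlampos.le, ← Real.rpow_mul hlampos.le]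
      rw [show ((2:ℕ):ℝ) * (((p-1):ℝ)/2) * ((1:ℝ)/(p-1)) = 1 by push_cast; field_simp]
      exact Real.rpow_one lam
    rw [e1, ← e2]
    exact Real.rpow_le_rpow (by positivity) hcore3 (by positivity)
  -- conclude
  have h6 : C*L*D = β*m := by rw [hD]; field_simp
  have h5 : D ^ ((2:ℝ)/(p-1)) * (β*m) ≤ C*L*lam := by
    calc D ^ ((2:ℝ)/(p-1)) * (β*m) = C*L*(D ^ ((2:ℝ)/(p-1)) * D) := by rw [← h6]; ring
    _ ≤ C*L*lam := mul_le_mul_of_nonneg_left h2 (by positivity)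
  calc D ^ ((2:ℝ)/(p-1)) * ((1/4)*lam*G + (ω/2)*lam⁻¹*M)
      - D ^ ((2:ℝ)/(p-1)) * D * ((1/(p+1))*lam⁻¹*L)
      = D ^ ((2:ℝ)/(p-1)) * ((1/4)*(lam*G) + (ω/2)*lam⁻¹*M - D*((1/(p+1))*lam⁻¹*L)) := by ring
    _ = D ^ ((2:ℝ)/(p-1)) * (β*m) / lam := by rw [hbr]; ring
    _ ≤ C*L := by
        rw [div_le_iff₀ hlampos]
        exact h5.trans_eq (by ring)

section Key

open MeasureTheory Filter Topology

lemma key_lemma {p γ ω : ℝ} (hp : 5 < p) (hγ : γ < 0) (hω : 0 < ω) (ψ : H1)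
    (hI : (1/2) * gradSq ψ + ω * massSq ψ < lpPow p ψ) :
    nOmega p γ ω ≤ (p-1)/(2*(p+1)) * lpPow p ψ := by
  have hp1 : (0:ℝ) < p + 1 := by linarith
  have hp3 : (0:ℝ) < p + 3 := by linarith
  have hpm : (0:ℝ) < p - 1 := by linarith
  have hL : 0 < lpPow p ψ :=
    lt_of_le_of_lt (add_nonneg (mul_nonneg (by norm_num) (gradSq_nonneg ψ))
      (mul_nonneg hω.le (massSq_nonneg ψ))) hI
  have hM : 0 < massSq ψ := massSq_pos_of_lpPow_pos hp1.ne' ψ hL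
  have hG : 0 < gradSq ψ := gradSq_pos_of_massSq_pos ψ hM
  set G : ℝ := gradSq ψ with hGdef
  set M : ℝ := massSq ψ with hMdef
  set L : ℝ := lpPow p ψ with hLdef
  set C : ℝ := (p-1)/(2*(p+1)) with hCdef
  have hCpos : 0 < C := by positivity
  set lam : ℝ := Real.sqrt (2*((p-1)/(p+3))*(ω*M)/G) with hlamdef
  have hlampos : 0 < lam := Real.sqrt_pos.2 (by positivity)
  -- translation points with small values
  choose xs hxs using exists_small_point ψ
  set b : ℕ → ℝ := fun n => ‖ψ.toFun (xs n)‖ ^ 2 with hbdef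
  have hb0 : ∀ n, 0 ≤ b n := fun n => by rw [hbdef]; positivity
  -- amplitude factors
  set uu : ℝ → ℝ := fun t => lam*(lam*G - γ*t)/(2*C*L) with huudef
  have huupos : ∀ t, 0 ≤ t → 0 < uu t := by
    intro t ht
    rw [huudef]
    have h1 : 0 < lam*G - γ*t := by nlinarith [mul_pos hlampos hG]
    positivity
  set mu : ℝ → ℝ := fun t => (uu t) ^ ((1:ℝ)/(p-1)) with hmudef
  have hmupos : ∀ t, 0 ≤ t → 0 < mu t := fun t ht =>
    Real.rpow_pos_of_pos (huupos t ht) _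
  have hmusq : ∀ t, 0 ≤ t → (mu t) ^ (2:ℕ) = (uu t) ^ ((2:ℝ)/(p-1)) := by
    intro t ht
    rw [hmudef, ← Real.rpow_natCast ((uu t) ^ ((1:ℝ)/(p-1))) 2,
      ← Real.rpow_mul (huupos t ht).le]
    congr 1
    push_cast
    ring
  have hmup1 : ∀ t, 0 ≤ t → (mu t) ^ (p+1) = (uu t) ^ (((p+1):ℝ)/(p-1)) := by
    intro t ht
    rw [hmudef, ← Real.rpow_mul (huupos t ht).le]
    congr 1
    field_simp
  -- the energy values along the sequence
  set E : ℝ → ℝ := fun t => (uu t) ^ ((2:ℝ)/(p-1)) * ((1/4)*lam*G - (γ/2)*t + (ω/2)*lam⁻¹*M)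
    - (uu t) ^ (((p+1):ℝ)/(p-1)) * ((1/(p+1))*lam⁻¹*L) with hEdef
  -- each E (b n) belongs to the minimization set
  have hmem : ∀ n, nOmega p γ ω ≤ E (b n) := by
    intro n
    set χ : H1 := H1.scale ψ (mu (b n)) lam (xs n) (hmupos _ (hb0 n)) hlampos with hχdef
    have hgrad : gradSq χ = (mu (b n))^2 * lam * G :=
      scale_gradSq ψ (xs n) (hmupos _ (hb0 n)) hlampos
    have hmass : massSq χ = (mu (b n))^2 * lam⁻¹ * M :=
      scale_massSq ψ (xs n) (hmupos _ (hb0 n)) hlampos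
    have hlp : lpPow p χ = (mu (b n))^(p+1) * lam⁻¹ * L :=
      scale_lpPow ψ (xs n) (hmupos _ (hb0 n)) hlampos p
    have hzero : ‖χ.toFun 0‖ ^ 2 = (mu (b n))^2 * b n :=
      scale_atZero ψ (xs n) (hmupos _ (hb0 n)) hlampos
    have hP : Pfun p γ χ = 0 := by
      unfold Pfun
      rw [hgrad, hzero, hlp, hmup1 _ (hb0 n), hmusq _ (hb0 n), ← hCdef]
      rw [show ((p+1):ℝ)/(p-1) = 2/(p-1) + 1 by field_simp; ring,
        Real.rpow_add (huupos _ (hb0 n)), Real.rpow_one, huudef]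
      field_simp
      ring
    have hS : Sfun p ω γ χ = E (b n) := by
      unfold Sfun
      rw [hgrad, hzero, hlp, hmass, hmup1 _ (hb0 n), hmusq _ (hb0 n), hEdef]
      ring
    have hne : χ.toFun ≠ 0 := by
      obtain ⟨y, hy⟩ := exists_ne_zero_of_lpPow_pos hp1.ne' ψ hL
      intro hzero'
      apply hy
      have hv := congrFun hzero' ((y - xs n)/lam)
      rw [hχdef] at hv
      simp only [H1.scale, Pi.zero_apply] at hv
      rw [show lam*((y - xs n)/lam) + xs n = y by field_simp; ring] at hv
      rcases mul_eq_zero.1 hv with h | h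
      · exact absurd h (by
          simpa using Complex.ofReal_ne_zero.2 (hmupos _ (hb0 n)).ne')
      · exact h
    apply csInf_le ⟨0, fun s hs => nOmega_set_bddBelow hp hγ hω s hs⟩
    exact ⟨χ, hne, hP, hS⟩
  -- pass to the limit
  have hbto : Tendsto b atTop (𝓝 0) := by
    apply squeeze_zero hb0 (fun n => (hxs n).le)
    have := tendsto_one_div_add_atTop_nhds_zero_nat (𝕜 := ℝ)
    simpa [one_div] using this
  have huucont : Continuous uu := by
    rw [huudef]
    exact (continuous_const.mul
      (continuous_const.sub (continuous_const.mul continuous_id))).div_const _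
  have hEcont : ContinuousAt E 0 := by
    rw [hEdef]
    apply ContinuousAt.sub
    · exact (huucont.continuousAt.rpow_const (Or.inr (by positivity))).mul
        (by fun_prop)
    · exact (huucont.continuousAt.rpow_const (Or.inr (by positivity))).mul
        continuousAt_const
  have hlim : Tendsto (fun n => E (b n)) atTop (𝓝 (E 0)) := hEcont.tendsto.comp hbto
  have hn0 : nOmega p γ ω ≤ E 0 := ge_of_tendsto hlim (Eventually.of_forall hmem)
  -- evaluate E 0 and conclude with key_ineq
  have hE0 : E 0 = (lam*(lam*G)/(2*C*L)) ^ ((2:ℝ)/(p-1)) * ((1/4)*lam*G + (ω/2)*lam⁻¹*M)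
      - (lam*(lam*G)/(2*C*L)) ^ (((p+1):ℝ)/(p-1)) * ((1/(p+1))*lam⁻¹*L) := by
    rw [hEdef, huudef]
    norm_num
  have hfin := key_ineq hp hω hG hM hL hI.le hlamdef
  rw [← hCdef] at hfin
  calc nOmega p γ ω ≤ E 0 := hn0
  _ ≤ C * L := by rw [hE0]; exact hfin
  _ = (p-1)/(2*(p+1)) * lpPow p ψ := by rw [hCdef, hLdef]

end Key

/-- if the sum `Φ = Σ_{l=0}^k φ_l` of `H¹` functions satisfies the four
almost-orthogonality inequalities below `n_ω − δ`, then every summand `φ_l` satisfies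
`0 ≤ S_{ω,γ}(φ_l) < n_ω` and `I_{ω,γ}(φ_l) ≥ 0`. -/
theorem profiles_in_plus_set (p γ ω : ℝ) (hp : 5 < p) (hγ : γ < 0) (hω : 0 < ω)
    (k : ℕ) (φ : ℕ → H1) (Φ : H1)
    (hΦ : ∀ x : ℝ, Φ.toFun x = ∑ l ∈ Finset.range (k+1), (φ l).toFun x)
    (hΦdx : ∀ x : ℝ, Φ.dx x = ∑ l ∈ Finset.range (k+1), (φ l).dx x)
    (δ ε : ℝ) (hδ : 0 < δ) (hε : 0 < ε) (hεδ : 2 * ε < δ)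
    (h1 : Sfun p ω γ Φ ≤ nOmega p γ ω - δ)
    (h2 : (∑ l ∈ Finset.range (k+1), Sfun p ω γ (φ l)) - ε ≤ Sfun p ω γ Φ)
    (h3 : -ε ≤ Ifun p ω γ Φ)
    (h4 : Ifun p ω γ Φ ≤ (∑ l ∈ Finset.range (k+1), Ifun p ω γ (φ l)) + ε) :
    ∀ l ≤ k, 0 ≤ Sfun p ω γ (φ l) ∧ Sfun p ω γ (φ l) < nOmega p γ ω ∧
      0 ≤ Ifun p ω γ (φ l) := by
  intro l hl
  have hp1 : (0:ℝ) < p + 1 := by linarith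
  have hpm : (0:ℝ) < p - 1 := by linarith
  have hC : (0:ℝ) < (p-1)/(2*(p+1)) := by positivity
  have hSI : ∀ ψ : H1, Sfun p ω γ ψ = Ifun p ω γ ψ / 2 + ((p-1)/(2*(p+1))) * lpPow p ψ := by
    intro ψ
    unfold Sfun Ifun
    field_simp
    ring
  have hIS : ∀ ψ : H1, Ifun p ω γ ψ / 2 ≤ Sfun p ω γ ψ := by
    intro ψ
    rw [hSI ψ]
    have := mul_nonneg hC.le (lpPow_nonneg p ψ)
    linarith
  have hT : l ∈ Finset.range (k+1) := Finset.mem_range.2 (Nat.lt_succ_of_le hl)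
  have hIpos : ∀ j ∈ Finset.range (k+1), 0 ≤ Ifun p ω γ (φ j) := by
    intro j hj
    by_contra hneg
    push_neg at hneg
    have hs1 : ∑ i ∈ Finset.range (k+1), Sfun p ω γ (φ i) ≤ nOmega p γ ω - δ + ε := by
      linarith
    have hsplit : Sfun p ω γ (φ j) + ∑ i ∈ (Finset.range (k+1)).erase j, Sfun p ω γ (φ i)
        = ∑ i ∈ Finset.range (k+1), Sfun p ω γ (φ i) :=
      Finset.add_sum_erase _ (fun i => Sfun p ω γ (φ i)) hj
    have herase : ∑ i ∈ (Finset.range (k+1)).erase j, Ifun p ω γ (φ i) / 2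
        ≤ ∑ i ∈ (Finset.range (k+1)).erase j, Sfun p ω γ (φ i) :=
      Finset.sum_le_sum fun i _ => hIS (φ i)
    have hIer : ∑ i ∈ (Finset.range (k+1)).erase j, Ifun p ω γ (φ i)
        = (∑ i ∈ Finset.range (k+1), Ifun p ω γ (φ i)) - Ifun p ω γ (φ j) :=
      Finset.sum_erase_eq_sub hj
    have hIdiv : ∑ i ∈ (Finset.range (k+1)).erase j, Ifun p ω γ (φ i) / 2
        = (∑ i ∈ (Finset.range (k+1)).erase j, Ifun p ω γ (φ i)) / 2 :=
      (Finset.sum_div _ _ _).symm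
    have hItot : -(2*ε) ≤ ∑ i ∈ Finset.range (k+1), Ifun p ω γ (φ i) := by linarith
    have hSj : Sfun p ω γ (φ j) ≤ nOmega p γ ω - δ + 2*ε + Ifun p ω γ (φ j)/2 := by
      linarith
    have hCL : (p-1)/(2*(p+1)) * lpPow p (φ j) < nOmega p γ ω := by
      have h := hSI (φ j)
      linarith
    have hIneg2 : (1/2) * gradSq (φ j) + ω * massSq (φ j) < lpPow p (φ j) := by
      have hb : 0 ≤ ‖(φ j).toFun 0‖ ^ 2 := by positivity
      have hgb : 0 ≤ (-γ) * ‖(φ j).toFun 0‖ ^ 2 := mul_nonneg (by linarith) hb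
      unfold Ifun at hneg
      linarith
    exact absurd (key_lemma hp hγ hω (φ j) hIneg2) (not_le.2 hCL)
  have hSpos : ∀ j ∈ Finset.range (k+1), 0 ≤ Sfun p ω γ (φ j) := by
    intro j hj
    rw [hSI (φ j)]
    have h1 := hIpos j hj
    have h2 := mul_nonneg hC.le (lpPow_nonneg p (φ j))
    linarith
  refine ⟨hSpos l hT, ?_, hIpos l hT⟩
  have hsingle : Sfun p ω γ (φ l) ≤ ∑ i ∈ Finset.range (k+1), Sfun p ω γ (φ i) :=
    Finset.single_le_sum hSpos hT
  linarith
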